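/- For every integer N ≥ 3, the constant c_N = N (∏_{j=1}^{N−1} (2j)^{2j}/(2j+1)^{2j+1})^{1/(2N)} satisfies c_N > √(N/2). -/

import Mathlib

open Filter MeasureTheory

/-- Convexity-type key inequality: `(m+1)^(2(m+1)) ≤ m^m (m+2)^(m+2)` for `m ≥ 2`. -/
lemma key_aux (m : ℕ) (hm : 2 ≤ m) :
    ((m : ℝ) + 1) ^ (2 * (m + 1)) ≤ (m : ℝ) ^ m * ((m : ℝ) + 2) ^ (m + 2) := by
  set a : ℝ := (m : ℝ) with ha
  have ha2 : (2 : ℝ) ≤ a := by rw [ha]; exact_mod_cast hm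
  have hs : (0 : ℝ) < a * (a + 2) := by nlinarith
  have h1 : (1 + 1 / (a * (a + 2))) ^ m ≤ Real.exp (1 / (a + 2)) := by
    calc (1 + 1 / (a * (a + 2))) ^ m ≤ (Real.exp (1 / (a * (a + 2)))) ^ m := by
          apply pow_le_pow_left₀ (by positivity)
          linarith [Real.add_one_le_exp (1 / (a * (a + 2)))]
      _ = Real.exp ((m : ℝ) * (1 / (a * (a + 2)))) := by rw [← Real.exp_nat_mul]
      _ = Real.exp (1 / (a + 2)) := by
          congr 1
          rw [← ha]
          field_simp
  have h2 : Real.exp (1 / (a + 2)) < (a + 2) / (a + 1) := by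
    have ht : (0 : ℝ) < 1 / (a + 2) := by positivity
    have h := Real.add_one_lt_exp (x := -(1 / (a + 2))) (by linarith)
    rw [Real.exp_neg] at h
    have hepos := Real.exp_pos (1 / (a + 2))
    rw [inv_eq_one_div, lt_div_iff₀ hepos] at h
    rw [lt_div_iff₀ (by linarith : (0:ℝ) < a + 1)]
    have h4 : (0:ℝ) < a + 2 := by linarith
    have h5 : 1 / (a+2) * (a+2) = 1 := by field_simp
    nlinarith
  have h3 : (1 + 1 / (a * (a + 2))) ^ m * (a + 1) ^ 2 ≤ (a + 2) ^ 2 := by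
    have := mul_le_mul_of_nonneg_right h1 (by positivity : (0:ℝ) ≤ (a + 1) ^ 2)
    have h6 : Real.exp (1 / (a + 2)) * (a + 1) ^ 2 ≤ (a + 2) * (a + 1) := by
      have h7 := mul_le_mul_of_nonneg_right h2.le (by positivity : (0:ℝ) ≤ (a + 1) ^ 2)
      calc Real.exp (1/(a+2)) * (a+1)^2 ≤ (a+2)/(a+1) * (a+1)^2 := h7
        _ = (a + 2) * (a + 1) := by field_simp
    nlinarith [this, h6]
  have h4 := mul_le_mul_of_nonneg_right h3 (by positivity : (0:ℝ) ≤ (a * (a + 2)) ^ m)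
  have h5 : (1 + 1 / (a * (a + 2))) ^ m * (a * (a + 2)) ^ m = ((a + 1) ^ 2) ^ m := by
    rw [← mul_pow]
    congr 1
    field_simp
    ring
  calc (a + 1) ^ (2 * (m + 1)) = ((a+1)^2)^m * (a+1)^2 := by
        rw [pow_mul, pow_succ]
    _ = (1 + 1 / (a * (a + 2))) ^ m * (a * (a + 2)) ^ m * (a+1)^2 := by rw [h5]
    _ ≤ (a + 2) ^ 2 * (a * (a + 2)) ^ m := by
        calc (1 + 1 / (a * (a + 2))) ^ m * (a * (a + 2)) ^ m * (a+1)^2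
            = (1 + 1 / (a * (a + 2))) ^ m * (a + 1) ^ 2 * (a * (a + 2)) ^ m := by ring
          _ ≤ (a + 2) ^ 2 * (a * (a + 2)) ^ m := h4
    _ = a ^ m * (a + 2) ^ (m + 2) := by rw [mul_pow, pow_add]; ring

/-- Square-root version of the key inequality. -/
lemma key2_aux (n : ℕ) (hn : 1 ≤ n) :
    ((2 * n + 1 : ℝ)) ^ (2 * n + 1) ≤ ((2 * n : ℝ)) ^ n * ((2 * n + 2 : ℝ)) ^ (n + 1) := by
  have h := key_aux (2 * n) (by omega)
  push_cast at h
  apply le_of_pow_le_pow_left₀ two_ne_zero (by positivity)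
  calc ((2 * (n:ℝ) + 1) ^ (2 * n + 1)) ^ 2 = (2 * (n:ℝ) + 1) ^ (2 * (2 * n + 1)) := by
        rw [← pow_mul]; congr 1; omega
    _ ≤ (2 * (n:ℝ)) ^ (2 * n) * (2 * (n:ℝ) + 2) ^ (2 * n + 2) := h
    _ = ((2 * (n:ℝ)) ^ n * (2 * (n:ℝ) + 2) ^ (n + 1)) ^ 2 := by
        symm
        rw [mul_pow, ← pow_mul, ← pow_mul]
        congr 1 <;> [congr 1; congr 1] <;> omega

/-- Product inequality proved by induction. -/
lemma prodIneq_aux (M : ℕ) :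
    2 * ∏ j ∈ Finset.Icc 1 M, ((2 * j + 1 : ℝ)) ^ (2 * j + 1)
      ≤ (∏ j ∈ Finset.Icc 1 M, ((2 * j : ℝ)) ^ (2 * j)) * ((2 * (M + 1) : ℝ)) ^ (M + 1) := by
  induction M with
  | zero => norm_num
  | succ M ih =>
    rw [Finset.prod_Icc_succ_top (by omega : 1 ≤ M + 1),
        Finset.prod_Icc_succ_top (by omega : 1 ≤ M + 1)]
    have hk := key2_aux (M + 1) (by omega)
    push_cast at hk ih ⊢
    have hE : (0:ℝ) ≤ ∏ j ∈ Finset.Icc 1 M, ((2 * j : ℝ)) ^ (2 * j) :=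
      Finset.prod_nonneg fun j _ => by positivity
    calc 2 * ((∏ j ∈ Finset.Icc 1 M, (2 * (j:ℝ) + 1) ^ (2 * j + 1)) * (2 * ((M:ℝ) + 1) + 1) ^ (2 * (M + 1) + 1))
        = (2 * ∏ j ∈ Finset.Icc 1 M, (2 * (j:ℝ) + 1) ^ (2 * j + 1)) * (2 * ((M:ℝ) + 1) + 1) ^ (2 * (M + 1) + 1) := by ring
      _ ≤ ((∏ j ∈ Finset.Icc 1 M, (2 * (j:ℝ)) ^ (2 * j)) * (2 * ((M:ℝ) + 1)) ^ (M + 1)) * (2 * ((M:ℝ) + 1) + 1) ^ (2 * (M + 1) + 1) := by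
          apply mul_le_mul_of_nonneg_right ih (by positivity)
      _ ≤ ((∏ j ∈ Finset.Icc 1 M, (2 * (j:ℝ)) ^ (2 * j)) * (2 * ((M:ℝ) + 1)) ^ (M + 1)) * ((2 * ((M:ℝ) + 1)) ^ (M + 1) * (2 * ((M:ℝ) + 1) + 2) ^ (M + 1 + 1)) := by
          apply mul_le_mul_of_nonneg_left hk (by positivity)
      _ = ((∏ j ∈ Finset.Icc 1 M, (2 * (j:ℝ)) ^ (2 * j)) * (2 * ((M:ℝ) + 1)) ^ (2 * (M + 1))) * (2 * ((M:ℝ) + 1 + 1)) ^ (M + 1 + 1) := by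
          rw [show (2 * ((M:ℝ) + 1) + 2) = 2 * ((M:ℝ) + 1 + 1) from by ring,
              show 2 * (M + 1) = (M + 1) + (M + 1) from by omega, pow_add]
          ring

/-- The constant `c_N` from Aldred–Armitage. -/
noncomputable def cN (N : ℕ) : ℝ :=
  if N = 2 then 1
  else N * (∏ j ∈ Finset.Icc 1 (N - 1),
      ((2 * j : ℝ)) ^ (2 * j) / ((2 * j + 1 : ℝ)) ^ (2 * j + 1)) ^ (1 / (2 * (N : ℝ)))

theorem stmt19 (N : ℕ) (hN : 3 ≤ N) : Real.sqrt ((N : ℝ) / 2) < cN N := by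
  have hN2 : N ≠ 2 := by omega
  rw [cN, if_neg hN2]
  have hNpos : (0:ℝ) < N := by exact_mod_cast Nat.lt_of_lt_of_le (by norm_num) hN
  have hN0 : (N:ℝ) ≠ 0 := ne_of_gt hNpos
  set M := N - 1 with hMdef
  have hM1 : M + 1 = N := by omega
  set L := ∏ j ∈ Finset.Icc 1 M, ((2 * j + 1 : ℝ)) ^ (2 * j + 1) with hLdef
  set E := ∏ j ∈ Finset.Icc 1 M, ((2 * j : ℝ)) ^ (2 * j) with hEdef
  have hLpos : 0 < L := Finset.prod_pos fun j _ => by positivity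
  have hEpos : 0 < E := Finset.prod_pos fun j hj => by
    have h1 : 1 ≤ j := (Finset.mem_Icc.mp hj).1
    have h2 : (0:ℝ) < j := by exact_mod_cast h1
    positivity
  have hprod := prodIneq_aux M
  have hcast : ((M:ℝ) + 1) = (N:ℝ) := by rw [← hM1]; push_cast; ring
  rw [hM1, hcast] at hprod
  have hb : (0:ℝ) < 2 * (N:ℝ) := by positivity
  have hP : ((2 * (N:ℝ)) ^ N)⁻¹ < E / L := by
    rw [inv_eq_one_div, div_lt_div_iff₀ (by positivity) hLpos]
    nlinarith [hprod, hLpos]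
  have hz : (0:ℝ) < 1 / (2 * (N:ℝ)) := by positivity
  have h1 : (((2 * (N:ℝ)) ^ N)⁻¹) ^ (1 / (2 * (N:ℝ)) : ℝ) < (E / L) ^ (1 / (2 * (N:ℝ)) : ℝ) :=
    Real.rpow_lt_rpow (by positivity) hP hz
  have h2 : (((2 * (N:ℝ)) ^ N)⁻¹) ^ (1 / (2 * (N:ℝ)) : ℝ) = (Real.sqrt (2 * (N:ℝ)))⁻¹ := by
    calc (((2 * (N:ℝ)) ^ N)⁻¹) ^ (1 / (2 * (N:ℝ)) : ℝ)
        = ((2 * (N:ℝ)) ^ (-(N:ℝ))) ^ (1 / (2 * (N:ℝ)) : ℝ) := by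
          rw [← Real.rpow_natCast (2 * (N:ℝ)) N, ← Real.rpow_neg hb.le]
      _ = (2 * (N:ℝ)) ^ (-(N:ℝ) * (1 / (2 * (N:ℝ)))) := by rw [← Real.rpow_mul hb.le]
      _ = (2 * (N:ℝ)) ^ (-(1/2) : ℝ) := by congr 1; field_simp
      _ = (Real.sqrt (2 * (N:ℝ)))⁻¹ := by
          rw [Real.rpow_neg hb.le, Real.sqrt_eq_rpow]
  have h3 : Real.sqrt ((N:ℝ) / 2) = (N:ℝ) * (Real.sqrt (2 * (N:ℝ)))⁻¹ := by
    rw [show ((N:ℝ) / 2) = (N:ℝ)^2 * (2 * (N:ℝ))⁻¹ from by field_simp,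
        Real.sqrt_mul (by positivity), Real.sqrt_sq hNpos.le, Real.sqrt_inv]
  rw [Finset.prod_div_distrib, h3]
  exact mul_lt_mul_of_pos_left (h2 ▸ h1) hNpos
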